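/- Fix integers p₁,p₂,p₃ ≥ 2 and integers q_k with 1 ≤ q_k ≤ p_k/2. (a) If q_k = p_k/2 for some k ∈ {1,2,3}, then any two Cartan matrices of type (q₁,q₂,q₃) with respect to (p₁,p₂,p₃) are equivalent. (b) If q_k < p_k/2 for all k, then, setting c_k = 2cos(q_kπ/p_k), every Cartan matrix A = (a_{ij}) of type (q₁,q₂,q₃) with respect to (p₁,p₂,p₃) is equivalent to the matrix with rows (2, −c₃, −c₂), (−c₃, 2, −t c₁), (−c₂, −t⁻¹c₁, 2) for exactly one nonzero real number t, namely t = −a_{12}a_{23}a_{31}/(c₁c₂c₃). -/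

import Mathlib

open Matrix

/-- A real 3×3 matrix `A` is a Cartan matrix of type `(q₁,q₂,q₃)` with respect to
`(p₁,p₂,p₃)` (indices shifted to `0,1,2`). -/
def IsCartanMatrix (p q : Fin 3 → ℕ) (A : Matrix (Fin 3) (Fin 3) ℝ) : Prop :=
  (∀ i, A i i = 2) ∧
  (∀ i j k : Fin 3, i ≠ j → j ≠ k → i ≠ k →
    A i j * A j i = 4 * Real.cos ((q k : ℝ) * Real.pi / (p k : ℝ)) ^ 2) ∧
  (∀ i j, A i j = 0 → A j i = 0)

/-- Two matrices are equivalent if they are conjugate by an invertible diagonal matrix. -/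
def CartanEquiv (A B : Matrix (Fin 3) (Fin 3) ℝ) : Prop :=
  ∃ d : Fin 3 → ℝ, (∀ i, d i ≠ 0) ∧
    B = Matrix.diagonal d * A * Matrix.diagonal (fun i => (d i)⁻¹)

lemma fin3_total {i j k : Fin 3} (hij : i ≠ j) (hjk : j ≠ k) (hik : i ≠ k) :
    ∀ m : Fin 3, m = i ∨ m = j ∨ m = k := by
  intro m; fin_cases i <;> fin_cases j <;> fin_cases k <;> fin_cases m <;> simp_all

lemma equiv_of_zero_pair (A B : Matrix (Fin 3) (Fin 3) ℝ)
    (i j k : Fin 3) (hij : i ≠ j) (hjk : j ≠ k) (hik : i ≠ k)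
    (hAd : ∀ m, A m m = 2) (hBd : ∀ m, B m m = 2)
    (hA0 : ∀ m n, A m n = 0 → A n m = 0) (hB0 : ∀ m n, B m n = 0 → B n m = 0)
    (hzA : A i j = 0) (hzA' : A j i = 0) (hzB : B i j = 0) (hzB' : B j i = 0)
    (h1 : A i k * A k i = B i k * B k i)
    (h2 : A j k * A k j = B j k * B k j) :
    CartanEquiv A B := by
  have hiffI : A i k = 0 ↔ B i k = 0 := by
    constructor
    · intro h
      have h' : B i k * B k i = 0 := by rw [← h1, h, zero_mul]
      rcases mul_eq_zero.mp h' with h'' | h''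
      · exact h''
      · exact hB0 _ _ h''
    · intro h
      have h' : A i k * A k i = 0 := by rw [h1, h, zero_mul]
      rcases mul_eq_zero.mp h' with h'' | h''
      · exact h''
      · exact hA0 _ _ h''
  have hiffJ : A j k = 0 ↔ B j k = 0 := by
    constructor
    · intro h
      have h' : B j k * B k j = 0 := by rw [← h2, h, zero_mul]
      rcases mul_eq_zero.mp h' with h'' | h''
      · exact h''
      · exact hB0 _ _ h''
    · intro h
      have h' : A j k * A k j = 0 := by rw [h2, h, zero_mul]
      rcases mul_eq_zero.mp h' with h'' | h''
      · exact h''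
      · exact hA0 _ _ h''
  set dI : ℝ := if A i k = 0 then 1 else B i k / A i k with hdIdef
  set dJ : ℝ := if A j k = 0 then 1 else B j k / A j k with hdJdef
  have hdI : dI ≠ 0 := by
    rw [hdIdef]; split_ifs with h
    · exact one_ne_zero
    · exact div_ne_zero (fun hb => h (hiffI.mpr hb)) h
  have hdJ : dJ ≠ 0 := by
    rw [hdJdef]; split_ifs with h
    · exact one_ne_zero
    · exact div_ne_zero (fun hb => h (hiffJ.mpr hb)) h
  have hBik : B i k = dI * A i k := by
    rw [hdIdef]; split_ifs with h
    · rw [hiffI.mp h, h, mul_zero]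
    · field_simp
  have hBjk : B j k = dJ * A j k := by
    rw [hdJdef]; split_ifs with h
    · rw [hiffJ.mp h, h, mul_zero]
    · field_simp
  have hBki : B k i = A k i / dI := by
    rw [hdIdef]; split_ifs with h
    · rw [hA0 _ _ h, hB0 _ _ (hiffI.mp h), zero_div]
    · have hb : B i k ≠ 0 := fun hb => h (hiffI.mpr hb)
      field_simp
      linear_combination -h1
  have hBkj : B k j = A k j / dJ := by
    rw [hdJdef]; split_ifs with h
    · rw [hA0 _ _ h, hB0 _ _ (hiffJ.mp h), zero_div]
    · have hb : B j k ≠ 0 := fun hb => h (hiffJ.mpr hb)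
      field_simp
      linear_combination -h2
  refine ⟨fun m => if m = i then dI else if m = j then dJ else 1, ?_, ?_⟩
  · intro m
    rcases fin3_total hij hjk hik m with rfl | rfl | rfl
    · simpa using hdI
    · simp only [if_neg (Ne.symm hij), if_pos rfl]; exact hdJ
    · simp only [if_neg (Ne.symm hik), if_neg (Ne.symm hjk)]; exact one_ne_zero
  · ext m n
    simp only [Matrix.mul_diagonal, Matrix.diagonal_mul]
    rcases fin3_total hij hjk hik m with rfl | rfl | rfl <;>
      rcases fin3_total hij hjk hik n with rfl | rfl | rfl
    · simp only [if_pos rfl, hAd, hBd]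
      field_simp
    · simp only [if_pos rfl, if_neg (Ne.symm hij), hzA, hzB, mul_zero, zero_mul]
    · simp only [if_pos rfl, if_neg (Ne.symm hik), if_neg (Ne.symm hjk), inv_one, mul_one]
      exact hBik
    · simp only [if_pos rfl, if_neg (Ne.symm hij), hzA', hzB', mul_zero, zero_mul]
    · simp only [if_neg (Ne.symm hij), if_pos rfl, hAd, hBd]
      field_simp
    · simp only [if_neg (Ne.symm hij), if_pos rfl, if_neg (Ne.symm hik), if_neg (Ne.symm hjk),
        inv_one, mul_one]
      exact hBjk
    · simp only [if_neg (Ne.symm hik), if_neg (Ne.symm hjk), if_pos rfl, one_mul,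
        eq_self_iff_true, if_true]
      rw [hBki, div_eq_mul_inv]
    · simp only [if_neg (Ne.symm hik), if_neg (Ne.symm hjk), if_pos rfl, one_mul,
        if_neg (Ne.symm hij), eq_self_iff_true, if_true]
      rw [hBkj, div_eq_mul_inv]
    · simp only [if_neg (Ne.symm hik), if_neg (Ne.symm hjk), hAd, hBd, inv_one, mul_one, one_mul]

lemma zero_pair {A : Matrix (Fin 3) (Fin 3) ℝ} (h0 : ∀ m n, A m n = 0 → A n m = 0)
    {a b : Fin 3} (h : A a b * A b a = 0) : A a b = 0 ∧ A b a = 0 := by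
  rcases mul_eq_zero.mp h with h | h
  exacts [⟨h, h0 _ _ h⟩, ⟨h0 _ _ h, h⟩]

/-- (a) If `q_k = p_k/2` for some `k`, any two Cartan matrices of type
`(q₁,q₂,q₃)` w.r.t. `(p₁,p₂,p₃)` are equivalent. (b) If `q_k < p_k/2` for all `k`, then
with `c_k = 2cos(q_kπ/p_k)` every Cartan matrix of this type is equivalent to the standard
matrix with parameter `t` for exactly one nonzero `t`, namely `t = −a₁₂a₂₃a₃₁/(c₁c₂c₃)`. -/
theorem cartan_matrix_classification
    (p q : Fin 3 → ℕ) (hp : ∀ k, 2 ≤ p k) (hq : ∀ k, 1 ≤ q k ∧ 2 * q k ≤ p k)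
    (c : Fin 3 → ℝ) (hc : ∀ k, c k = 2 * Real.cos ((q k : ℝ) * Real.pi / (p k : ℝ))) :
    ((∃ k, 2 * q k = p k) →
      ∀ A B : Matrix (Fin 3) (Fin 3) ℝ,
        IsCartanMatrix p q A → IsCartanMatrix p q B → CartanEquiv A B) ∧
    ((∀ k, 2 * q k < p k) →
      ∀ A : Matrix (Fin 3) (Fin 3) ℝ, IsCartanMatrix p q A →
        ∀ t₀ : ℝ, t₀ = -(A 0 1 * A 1 2 * A 2 0) / (c 0 * c 1 * c 2) →
          t₀ ≠ 0 ∧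
          CartanEquiv A !![2, -c 2, -c 1; -c 2, 2, -t₀ * c 0; -c 1, -t₀⁻¹ * c 0, 2] ∧
          (∀ t : ℝ, t ≠ 0 →
            CartanEquiv A !![2, -c 2, -c 1; -c 2, 2, -t * c 0; -c 1, -t⁻¹ * c 0, 2] →
            t = t₀)) := by
  constructor
  · rintro ⟨k, hk⟩ A B ⟨hAd, hAp, hA0⟩ ⟨hBd, hBp, hB0⟩
    have hq1 : (1:ℝ) ≤ (q k : ℝ) := by exact_mod_cast (hq k).1
    have hcos : Real.cos ((q k : ℝ) * Real.pi / (p k : ℝ)) = 0 := by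
      have hpk : (p k : ℝ) = 2 * (q k : ℝ) := by exact_mod_cast hk.symm
      have : (q k : ℝ) * Real.pi / (p k : ℝ) = Real.pi / 2 := by
        rw [hpk]; field_simp
      rw [this, Real.cos_pi_div_two]
    have hzero : ∀ i j : Fin 3, i ≠ j → j ≠ k → i ≠ k →
        A i j * A j i = 0 ∧ B i j * B j i = 0 := by
      intro i j hij hjk hik
      rw [hAp i j k hij hjk hik, hBp i j k hij hjk hik, hcos]
      norm_num
    fin_cases k
    · obtain ⟨hA1, hA2⟩ := zero_pair hA0 (hzero 1 2 (by decide) (by decide) (by decide)).1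
      obtain ⟨hB1, hB2⟩ := zero_pair hB0 (hzero 1 2 (by decide) (by decide) (by decide)).2
      exact equiv_of_zero_pair A B 1 2 0 (by decide) (by decide) (by decide) hAd hBd hA0 hB0
        hA1 hA2 hB1 hB2
        (by rw [hAp 1 0 2 (by decide) (by decide) (by decide),
                hBp 1 0 2 (by decide) (by decide) (by decide)])
        (by rw [hAp 2 0 1 (by decide) (by decide) (by decide),
                hBp 2 0 1 (by decide) (by decide) (by decide)])
    · obtain ⟨hA1, hA2⟩ := zero_pair hA0 (hzero 0 2 (by decide) (by decide) (by decide)).1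
      obtain ⟨hB1, hB2⟩ := zero_pair hB0 (hzero 0 2 (by decide) (by decide) (by decide)).2
      exact equiv_of_zero_pair A B 0 2 1 (by decide) (by decide) (by decide) hAd hBd hA0 hB0
        hA1 hA2 hB1 hB2
        (by rw [hAp 0 1 2 (by decide) (by decide) (by decide),
                hBp 0 1 2 (by decide) (by decide) (by decide)])
        (by rw [hAp 2 1 0 (by decide) (by decide) (by decide),
                hBp 2 1 0 (by decide) (by decide) (by decide)])
    · obtain ⟨hA1, hA2⟩ := zero_pair hA0 (hzero 0 1 (by decide) (by decide) (by decide)).1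
      obtain ⟨hB1, hB2⟩ := zero_pair hB0 (hzero 0 1 (by decide) (by decide) (by decide)).2
      exact equiv_of_zero_pair A B 0 1 2 (by decide) (by decide) (by decide) hAd hBd hA0 hB0
        hA1 hA2 hB1 hB2
        (by rw [hAp 0 2 1 (by decide) (by decide) (by decide),
                hBp 0 2 1 (by decide) (by decide) (by decide)])
        (by rw [hAp 1 2 0 (by decide) (by decide) (by decide),
                hBp 1 2 0 (by decide) (by decide) (by decide)])
  · rintro hlt A ⟨hAd, hAp, hA0⟩ t₀ ht₀
    have hcpos : ∀ k, 0 < c k := by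
      intro k
      rw [hc k]
      have hp0 : (0:ℝ) < (p k : ℝ) := by
        have := hp k; positivity
      have hq1 : (1:ℝ) ≤ (q k : ℝ) := by exact_mod_cast (hq k).1
      have hlt' : (2:ℝ) * (q k : ℝ) < (p k : ℝ) := by exact_mod_cast hlt k
      have hcos : 0 < Real.cos ((q k : ℝ) * Real.pi / (p k : ℝ)) := by
        apply Real.cos_pos_of_mem_Ioo
        constructor
        · have : 0 < (q k : ℝ) * Real.pi / (p k : ℝ) := by positivity
          linarith [Real.pi_pos]
        · rw [div_lt_iff₀ hp0]
          have := Real.pi_pos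
          nlinarith
      linarith
    have hc0 := (hcpos 0).ne'
    have hc1 := (hcpos 1).ne'
    have hc2 := (hcpos 2).ne'
    have hP0 : A 1 2 * A 2 1 = c 0 ^ 2 := by
      rw [hAp 1 2 0 (by decide) (by decide) (by decide), hc 0]; ring
    have hP1 : A 0 2 * A 2 0 = c 1 ^ 2 := by
      rw [hAp 0 2 1 (by decide) (by decide) (by decide), hc 1]; ring
    have hP2 : A 0 1 * A 1 0 = c 2 ^ 2 := by
      rw [hAp 0 1 2 (by decide) (by decide) (by decide), hc 2]; ring
    have hne0 : A 1 2 * A 2 1 ≠ 0 := by rw [hP0]; positivity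
    have hne1 : A 0 2 * A 2 0 ≠ 0 := by rw [hP1]; positivity
    have hne2 : A 0 1 * A 1 0 ≠ 0 := by rw [hP2]; positivity
    obtain ⟨h12, h21⟩ := mul_ne_zero_iff.mp hne0
    obtain ⟨h02, h20⟩ := mul_ne_zero_iff.mp hne1
    obtain ⟨h01, h10⟩ := mul_ne_zero_iff.mp hne2
    have e10 : A 1 0 = c 2 ^ 2 / A 0 1 := by field_simp; linear_combination hP2
    have e20 : A 2 0 = c 1 ^ 2 / A 0 2 := by field_simp; linear_combination hP1
    have e21 : A 2 1 = c 0 ^ 2 / A 1 2 := by field_simp; linear_combination hP0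
    subst ht₀
    refine ⟨?_, ⟨![1, -(A 0 1) / c 2, -(A 0 2) / c 1], ?_, ?_⟩, ?_⟩
    · exact div_ne_zero (neg_ne_zero.mpr (mul_ne_zero (mul_ne_zero h01 h12) h20))
        (mul_ne_zero (mul_ne_zero hc0 hc1) hc2)
    · intro i
      fin_cases i
      · exact one_ne_zero
      · exact div_ne_zero (neg_ne_zero.mpr h01) hc2
      · exact div_ne_zero (neg_ne_zero.mpr h02) hc1
    · ext m n
      fin_cases m <;> fin_cases n <;>
        simp [Matrix.mul_diagonal, Matrix.diagonal_mul]
      · exact (hAd 0).symm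
      · field_simp
      · field_simp
      · rw [e10]; field_simp
      · rw [hAd]; field_simp
      · rw [e20]; field_simp
      · rw [e20]; field_simp
      · rw [e20, e21]; field_simp
      · rw [hAd]; field_simp
    · rintro t ht ⟨d, hd, hEq⟩
      have E01 : -c 2 = d 0 * A 0 1 * (d 1)⁻¹ := by
        simpa using congrFun (congrFun hEq 0) 1
      have E12 : -(t * c 0) = d 1 * A 1 2 * (d 2)⁻¹ := by
        simpa using congrFun (congrFun hEq 1) 2
      have E20 : -c 1 = d 2 * A 2 0 * (d 0)⁻¹ := by
        simpa using congrFun (congrFun hEq 2) 0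
      have key : (d 0 * A 0 1 * (d 1)⁻¹) * (d 1 * A 1 2 * (d 2)⁻¹) * (d 2 * A 2 0 * (d 0)⁻¹)
          = A 0 1 * A 1 2 * A 2 0 := by
        field_simp [hd 0, hd 1, hd 2]
      have main : t * (c 0 * c 1 * c 2) = -(A 0 1 * A 1 2 * A 2 0) := by
        calc t * (c 0 * c 1 * c 2) = -((-c 2) * (-(t * c 0)) * (-c 1)) := by ring
        _ = -((d 0 * A 0 1 * (d 1)⁻¹) * (d 1 * A 1 2 * (d 2)⁻¹) * (d 2 * A 2 0 * (d 0)⁻¹)) := by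
            rw [E01, E12, E20]
        _ = -(A 0 1 * A 1 2 * A 2 0) := by rw [key]
      rw [eq_div_iff (mul_ne_zero (mul_ne_zero hc0 hc1) hc2)]
      linear_combination main
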